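/- For every $\mu > 0$, the Kato norm of the scaled Yukawa potential satisfies $\sup_{x \in \mathbb{R}^3} \int_{\mathbb{R}^3} \frac{e^{-\mu |y|}}{|y|\,|x-y|}\, dy = \frac{4\pi}{\mu}$. -/

import Mathlib

open MeasureTheory Real Set Metric Function
open scoped ENNReal

noncomputable section YukawaAux

namespace YukawaAux

local notation "dim" => Module.finrank ℝ
local notation "E3" => EuclideanSpace ℝ (Fin 3)

/-- lintegral version of the polar coordinate formula. -/
theorem lintegral_fun_norm_addHaar {E : Type*} [NormedAddCommGroup E] [NormedSpace ℝ E]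
    [MeasurableSpace E] [BorelSpace E] [Nontrivial E] [FiniteDimensional ℝ E]
    (μ : Measure E) [μ.IsAddHaarMeasure]
    (f : ℝ → ℝ≥0∞) (hf : Measurable f) :
    ∫⁻ x, f ‖x‖ ∂μ
      = μ.toSphere univ * ∫⁻ r in Ioi (0 : ℝ), ENNReal.ofReal (r ^ (dim E - 1)) * f r := by
  have h2 : Measurable fun r : Ioi (0:ℝ) => f r := hf.comp measurable_subtype_coe
  have hmeas : Measurable fun p : sphere (0 : E) 1 × Ioi (0 : ℝ) => f p.2 :=
    (hf.comp measurable_subtype_coe).comp measurable_snd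
  calc
    ∫⁻ x, f ‖x‖ ∂μ = ∫⁻ x : ({(0)}ᶜ : Set E), f ‖(x : E)‖ ∂(μ.comap (↑)) := by
      rw [lintegral_subtype_comap (measurableSet_singleton _).compl fun x => f ‖x‖,
        restrict_compl_singleton]
    _ = ∫⁻ p : sphere (0 : E) 1 × Ioi (0 : ℝ), f p.2
        ∂(μ.toSphere.prod (.volumeIoiPow (dim E - 1))) := by
      refine Eq.trans ?_ (μ.measurePreserving_homeomorphUnitSphereProd.lintegral_comp hmeas)
      exact lintegral_congr fun x => by rw [homeomorphUnitSphereProd_apply_snd_coe]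
    _ = μ.toSphere univ * ∫⁻ r : Ioi (0 : ℝ), f r ∂(Measure.volumeIoiPow (dim E - 1)) := by
      rw [lintegral_prod _ hmeas.aemeasurable]
      simp [lintegral_const, mul_comm]
    _ = μ.toSphere univ * ∫⁻ r in Ioi (0 : ℝ), ENNReal.ofReal (r ^ (dim E - 1)) * f r := by
      rw [Measure.volumeIoiPow,
        lintegral_withDensity_eq_lintegral_mul _
          ((measurable_subtype_coe.pow_const _).ennreal_ofReal) h2]
      simp only [Pi.mul_apply]
      rw [lintegral_subtype_comap measurableSet_Ioi
          (fun r => ENNReal.ofReal (r ^ (dim E - 1)) * f r)]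

lemma gamma_52 : Real.Gamma ((3:ℕ) / 2 + 1) = 3 / 4 * Real.sqrt π := by
  have h1 : ((3:ℕ) / 2 + 1 : ℝ) = 3 / 2 + 1 := by norm_num
  rw [h1, Real.Gamma_add_one (by norm_num)]
  have h2 : (3 / 2 : ℝ) = 1 / 2 + 1 := by norm_num
  rw [h2, Real.Gamma_add_one (by norm_num), Real.Gamma_one_half_eq]
  ring

lemma vol_ball_E3 : volume (ball (0 : E3) 1) = ENNReal.ofReal (4 / 3 * π) := by
  rw [EuclideanSpace.volume_ball]
  have hcard : Fintype.card (Fin 3) = 3 := by simp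
  rw [hcard, gamma_52]
  have hsq : Real.sqrt π ^ 3 = π * Real.sqrt π := by
    rw [pow_succ, Real.sq_sqrt pi_pos.le]
  rw [hsq]
  have hne : Real.sqrt π ≠ 0 := by positivity
  rw [show π * Real.sqrt π / (3 / 4 * Real.sqrt π) = 4 / 3 * π by field_simp]
  simp

lemma L0_eq (μ : ℝ) (hμ : 0 < μ) :
    ∫⁻ y : E3, ENNReal.ofReal (Real.exp (-μ * ‖y‖) / (‖y‖ * ‖y‖))
      = ENNReal.ofReal (4 * π / μ) := by
  have hf : Measurable fun r : ℝ => ENNReal.ofReal (Real.exp (-μ * r) / (r * r)) := by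
    fun_prop
  rw [lintegral_fun_norm_addHaar volume _ hf]
  have hdim : dim E3 = 3 := by simp [finrank_euclideanSpace]
  have h1d : ∫⁻ r in Ioi (0 : ℝ),
      ENNReal.ofReal (r ^ (dim E3 - 1)) * ENNReal.ofReal (Real.exp (-μ * r) / (r * r))
      = ENNReal.ofReal (1 / μ) := by
    rw [hdim]
    have hcong : ∀ᵐ r ∂volume, r ∈ Ioi (0:ℝ) →
        ENNReal.ofReal (r ^ (3 - 1)) * ENNReal.ofReal (Real.exp (-μ * r) / (r * r))
          = ENNReal.ofReal (Real.exp (-μ * r)) := by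
      refine ae_of_all _ fun r hr => ?_
      have hr0 : (0:ℝ) < r := hr
      rw [← ENNReal.ofReal_mul (by positivity)]
      congr 1
      rw [show (3 : ℕ) - 1 = 2 from rfl, pow_two, mul_div_assoc']
      rw [mul_div_cancel_left₀ _ (by positivity : r * r ≠ 0)]
    rw [setLIntegral_congr_fun_ae measurableSet_Ioi hcong,
      ← ofReal_integral_eq_lintegral_ofReal (exp_neg_integrableOn_Ioi 0 hμ)
        (ae_of_all _ fun r => (Real.exp_pos _).le)]
    congr 1
    have : ∀ r : ℝ, Real.exp (-μ * r) = Real.exp (-(μ * r)) := by intro r; rw [neg_mul]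
    simp_rw [this]
    rw [integral_comp_mul_left_Ioi (fun x => Real.exp (-x)) 0 hμ, mul_zero,
      integral_exp_neg_Ioi, neg_zero, Real.exp_zero, smul_eq_mul, mul_one, one_div]
  rw [h1d, Measure.toSphere_apply_univ, hdim, vol_ball_E3]
  rw [show ((3:ℕ) : ℝ≥0∞) = ENNReal.ofReal 3 by simp]
  rw [← ENNReal.ofReal_mul (by norm_num), ← ENNReal.ofReal_mul (by positivity)]
  congr 1
  field_simp

/-- layer-cake representation of `ofReal`. -/
lemma ofReal_eq_lintegral_ind (a : ℝ) :
    ENNReal.ofReal a = ∫⁻ t in Ioi (0 : ℝ), (if t < a then (1 : ℝ≥0∞) else 0) := by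
  have h1 : (fun t : ℝ => if t < a then (1 : ℝ≥0∞) else 0)
      = (Iio a).indicator 1 := by
    ext t; simp [Set.indicator_apply]
  rw [h1, lintegral_indicator_one measurableSet_Iio,
    Measure.restrict_apply measurableSet_Iio, Iio_inter_Ioi]
  rw [Real.volume_Ioo]; simp

/-- Layer-cake representation of the Yukawa-Kato integrand. -/
lemma Lx_eq (μ : ℝ) (x : E3) :
    ∫⁻ y : E3, ENNReal.ofReal (Real.exp (-μ * ‖y‖) / (‖y‖ * ‖x - y‖))
      = ∫⁻ t in Ioi (0:ℝ), ∫⁻ s in Ioi (0:ℝ),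
          volume ({y : E3 | t < Real.exp (-μ * ‖y‖) / ‖y‖} ∩ {y : E3 | s < 1 / ‖x - y‖}) := by
  have hf₁ : Measurable fun y : E3 => Real.exp (-μ * ‖y‖) / ‖y‖ := by fun_prop
  have hg : Measurable fun y : E3 => 1 / ‖x - y‖ := by fun_prop
  calc
    ∫⁻ y : E3, ENNReal.ofReal (Real.exp (-μ * ‖y‖) / (‖y‖ * ‖x - y‖))
        = ∫⁻ y : E3, ENNReal.ofReal (Real.exp (-μ * ‖y‖) / ‖y‖)
            * ENNReal.ofReal (1 / ‖x - y‖) := by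
      refine lintegral_congr fun y => ?_
      rw [← ENNReal.ofReal_mul (div_nonneg (Real.exp_pos _).le (norm_nonneg _))]
      rw [div_mul_eq_div_mul_one_div]
    _ = ∫⁻ y : E3, ∫⁻ t in Ioi (0:ℝ),
          (if t < Real.exp (-μ * ‖y‖) / ‖y‖ then (1:ℝ≥0∞) else 0)
            * ENNReal.ofReal (1 / ‖x - y‖) := by
      refine lintegral_congr fun y => ?_
      rw [ofReal_eq_lintegral_ind,
        ← lintegral_mul_const' _ _ ENNReal.ofReal_ne_top]
    _ = ∫⁻ t in Ioi (0:ℝ), ∫⁻ y : E3,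
          (if t < Real.exp (-μ * ‖y‖) / ‖y‖ then (1:ℝ≥0∞) else 0)
            * ENNReal.ofReal (1 / ‖x - y‖) := by
      refine lintegral_lintegral_swap ?_
      refine Measurable.aemeasurable ?_
      exact Measurable.mul
        (Measurable.ite
          (measurableSet_lt measurable_snd (hf₁.comp measurable_fst))
          measurable_const measurable_const)
        ((hg.comp measurable_fst).ennreal_ofReal)
    _ = ∫⁻ t in Ioi (0:ℝ), ∫⁻ s in Ioi (0:ℝ),
          volume ({y : E3 | t < Real.exp (-μ * ‖y‖) / ‖y‖} ∩ {y : E3 | s < 1 / ‖x - y‖}) := by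
      refine lintegral_congr fun t => ?_
      calc
        ∫⁻ y : E3, (if t < Real.exp (-μ * ‖y‖) / ‖y‖ then (1:ℝ≥0∞) else 0)
              * ENNReal.ofReal (1 / ‖x - y‖)
            = ∫⁻ y : E3, ∫⁻ s in Ioi (0:ℝ),
                (if t < Real.exp (-μ * ‖y‖) / ‖y‖ then (1:ℝ≥0∞) else 0)
                  * (if s < 1 / ‖x - y‖ then (1:ℝ≥0∞) else 0) := by
          refine lintegral_congr fun y => ?_
          rw [ofReal_eq_lintegral_ind,
            ← lintegral_const_mul' _ _ (by split <;> simp)]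
        _ = ∫⁻ s in Ioi (0:ℝ), ∫⁻ y : E3,
                (if t < Real.exp (-μ * ‖y‖) / ‖y‖ then (1:ℝ≥0∞) else 0)
                  * (if s < 1 / ‖x - y‖ then (1:ℝ≥0∞) else 0) := by
          refine lintegral_lintegral_swap ?_
          refine Measurable.aemeasurable ?_
          exact Measurable.mul
            ((Measurable.ite
              (measurableSet_lt measurable_const hf₁)
              measurable_const measurable_const).comp measurable_fst)
            (Measurable.ite
              (measurableSet_lt measurable_snd (hg.comp measurable_fst))
              measurable_const measurable_const)
        _ = ∫⁻ s in Ioi (0:ℝ),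
              volume ({y : E3 | t < Real.exp (-μ * ‖y‖) / ‖y‖} ∩ {y : E3 | s < 1 / ‖x - y‖}) := by
          refine lintegral_congr fun s => ?_
          have hpt : ∀ y : E3,
              (if t < Real.exp (-μ * ‖y‖) / ‖y‖ then (1:ℝ≥0∞) else 0)
                * (if s < 1 / ‖x - y‖ then (1:ℝ≥0∞) else 0)
              = ({y : E3 | t < Real.exp (-μ * ‖y‖) / ‖y‖}
                  ∩ {y : E3 | s < 1 / ‖x - y‖}).indicator 1 y := by
            intro y
            simp only [Set.indicator_apply, Set.mem_inter_iff, Set.mem_setOf_eq]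
            split_ifs <;> simp_all <;> linarith
          rw [lintegral_congr hpt, lintegral_indicator_one
            ((measurableSet_lt measurable_const hf₁).inter
              (measurableSet_lt measurable_const hg))]

/-- key geometric inequality -/
lemma key_inter {E : Type*} [NormedAddCommGroup E] [NormedSpace ℝ E]
    [MeasurableSpace E] [BorelSpace E] [Nontrivial E] [FiniteDimensional ℝ E]
    (ν : Measure E) [ν.IsAddHaarMeasure]
    (S : Set ℝ) (hdc : ∀ ⦃r s : ℝ⦄, r ∈ S → 0 < s → s ≤ r → s ∈ S)
    (hpos : ∀ r ∈ S, 0 < r) {b : ℝ} (C : Set E)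
    (hC : ν C ≤ ν (ball (0 : E) b)) :
    ν ({y : E | ‖y‖ ∈ S} ∩ C)
      ≤ ν ({y : E | ‖y‖ ∈ S} ∩ {y : E | 0 < ‖y‖ ∧ ‖y‖ < b}) := by
  have hball : ν {y : E | 0 < ‖y‖ ∧ ‖y‖ < b} = ν (ball (0 : E) b) := by
    have : {y : E | 0 < ‖y‖ ∧ ‖y‖ < b} = ball (0 : E) b \ {0} := by
      ext y
      simp [mem_ball_zero_iff, and_comm, norm_pos_iff, mem_diff]
    rw [this, measure_diff_null (measure_singleton _)]
  by_cases h : ∃ r ∈ S, b ≤ r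
  · obtain ⟨r, hr, hbr⟩ := h
    have hsub : {y : E | 0 < ‖y‖ ∧ ‖y‖ < b}
        ⊆ {y : E | ‖y‖ ∈ S} ∩ {y : E | 0 < ‖y‖ ∧ ‖y‖ < b} := fun y hy =>
      ⟨hdc hr hy.1 (hy.2.le.trans hbr), hy⟩
    calc ν ({y : E | ‖y‖ ∈ S} ∩ C) ≤ ν C := measure_mono inter_subset_right
      _ ≤ ν (ball (0 : E) b) := hC
      _ = ν {y : E | 0 < ‖y‖ ∧ ‖y‖ < b} := hball.symm
      _ ≤ _ := measure_mono hsub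
  · push_neg at h
    have : {y : E | ‖y‖ ∈ S} ∩ {y : E | 0 < ‖y‖ ∧ ‖y‖ < b} = {y : E | ‖y‖ ∈ S} := by
      apply inter_eq_self_of_subset_left
      intro y hy
      exact ⟨hpos _ hy, h _ hy⟩
    rw [this]
    exact measure_mono inter_subset_left

lemma Lx_le_L0 (μ : ℝ) (hμ : 0 < μ) (x : E3) :
    ∫⁻ y : E3, ENNReal.ofReal (Real.exp (-μ * ‖y‖) / (‖y‖ * ‖x - y‖))
      ≤ ∫⁻ y : E3, ENNReal.ofReal (Real.exp (-μ * ‖y‖) / (‖y‖ * ‖(0:E3) - y‖)) := by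
  rw [Lx_eq μ x, Lx_eq μ 0]
  refine lintegral_mono_ae ?_
  filter_upwards [ae_restrict_mem measurableSet_Ioi] with t ht
  refine lintegral_mono_ae ?_
  filter_upwards [ae_restrict_mem measurableSet_Ioi] with s hs
  have ht0 : (0:ℝ) < t := ht
  have hs0 : (0:ℝ) < s := hs
  have hC : volume {y : E3 | s < 1 / ‖x - y‖} ≤ volume (ball (0:E3) (1/s)) := by
    have hsub : {y : E3 | s < 1 / ‖x - y‖} ⊆ ball x (1/s) := by
      intro y hy
      have hy' : s < 1 / ‖x - y‖ := hy
      have h0 : 0 < ‖x - y‖ := by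
        rcases eq_or_lt_of_le (norm_nonneg (x - y)) with h | h
        · exfalso; rw [← h] at hy'; simp at hy'; linarith
        · exact h
      have hlt : ‖x - y‖ < 1 / s := by
        rw [lt_div_iff₀ hs0]
        rw [lt_div_iff₀ h0] at hy'
        nlinarith
      exact mem_ball.2 (by rw [dist_eq_norm, norm_sub_rev]; exact hlt)
    calc volume {y : E3 | s < 1 / ‖x - y‖} ≤ volume (ball x (1/s)) := measure_mono hsub
      _ = volume (ball (0:E3) (1/s)) := Measure.addHaar_ball_center volume x _
  have hC0 : {y : E3 | s < 1 / ‖(0:E3) - y‖} = {y : E3 | 0 < ‖y‖ ∧ ‖y‖ < 1/s} := by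
    ext y
    simp only [zero_sub, norm_neg, mem_setOf_eq]
    constructor
    · intro h
      have h0 : 0 < ‖y‖ := by
        rcases eq_or_lt_of_le (norm_nonneg y) with h' | h'
        · exfalso; rw [← h'] at h; simp at h; linarith
        · exact h'
      refine ⟨h0, ?_⟩
      rw [lt_div_iff₀ hs0]
      rw [lt_div_iff₀ h0] at h
      nlinarith
    · rintro ⟨h0, h1⟩
      rw [lt_div_iff₀ h0]
      rw [lt_div_iff₀ hs0] at h1
      nlinarith
  rw [hC0]
  have hdc : ∀ ⦃r r' : ℝ⦄, r ∈ {r : ℝ | t < Real.exp (-μ * r) / r} → 0 < r' → r' ≤ r →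
      r' ∈ {r : ℝ | t < Real.exp (-μ * r) / r} := by
    intro r r' hr hr' hle
    have hrr : (0:ℝ) < r := lt_of_lt_of_le hr' hle
    have : Real.exp (-μ * r) / r ≤ Real.exp (-μ * r') / r' :=
      div_le_div₀ (Real.exp_pos _).le (Real.exp_le_exp.2 (by nlinarith)) hr' hle
    exact lt_of_lt_of_le hr this
  have hpos : ∀ r ∈ {r : ℝ | t < Real.exp (-μ * r) / r}, 0 < r := by
    intro r hr
    have hr' : t < Real.exp (-μ * r) / r := hr
    rcases lt_trichotomy r 0 with h | h | h
    · exfalso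
      have : Real.exp (-μ * r) / r < 0 := div_neg_of_pos_of_neg (Real.exp_pos _) h
      linarith
    · exfalso; rw [h] at hr'; simp at hr'; linarith
    · exact h
  exact key_inter volume {r : ℝ | t < Real.exp (-μ * r) / r} hdc hpos _ hC

end YukawaAux

end YukawaAux

open MeasureTheory Real Set Metric
open scoped ENNReal

theorem scaled_yukawa_kato_norm (μ : ℝ) (hμ : 0 < μ) :
    (⨆ x : EuclideanSpace ℝ (Fin 3),
      ∫ y : EuclideanSpace ℝ (Fin 3), Real.exp (-μ * ‖y‖) / (‖y‖ * ‖x - y‖))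
        = 4 * Real.pi / μ := by
  have hIeq : ∀ x : EuclideanSpace ℝ (Fin 3),
      (∫ y : EuclideanSpace ℝ (Fin 3), Real.exp (-μ * ‖y‖) / (‖y‖ * ‖x - y‖))
        = (∫⁻ y : EuclideanSpace ℝ (Fin 3),
            ENNReal.ofReal (Real.exp (-μ * ‖y‖) / (‖y‖ * ‖x - y‖))).toReal := by
    intro x
    refine integral_eq_lintegral_of_nonneg_ae (ae_of_all _ fun y => by positivity) ?_
    exact (by fun_prop :
      Measurable fun y : EuclideanSpace ℝ (Fin 3) =>
        Real.exp (-μ * ‖y‖) / (‖y‖ * ‖x - y‖)).aestronglyMeasurable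
  have hL0 : (∫⁻ y : EuclideanSpace ℝ (Fin 3),
      ENNReal.ofReal (Real.exp (-μ * ‖y‖) / (‖y‖ * ‖(0 : EuclideanSpace ℝ (Fin 3)) - y‖)))
        = ENNReal.ofReal (4 * π / μ) := by
    rw [lintegral_congr fun y => by rw [zero_sub, norm_neg]]
    exact YukawaAux.L0_eq μ hμ
  have hle : ∀ x : EuclideanSpace ℝ (Fin 3),
      (∫ y : EuclideanSpace ℝ (Fin 3), Real.exp (-μ * ‖y‖) / (‖y‖ * ‖x - y‖))
        ≤ 4 * Real.pi / μ := by
    intro x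
    rw [hIeq x]
    calc (∫⁻ y : EuclideanSpace ℝ (Fin 3),
          ENNReal.ofReal (Real.exp (-μ * ‖y‖) / (‖y‖ * ‖x - y‖))).toReal
        ≤ (∫⁻ y : EuclideanSpace ℝ (Fin 3),
            ENNReal.ofReal (Real.exp (-μ * ‖y‖)
              / (‖y‖ * ‖(0 : EuclideanSpace ℝ (Fin 3)) - y‖))).toReal := by
          refine ENNReal.toReal_mono ?_ (YukawaAux.Lx_le_L0 μ hμ x)
          rw [hL0]; exact ENNReal.ofReal_ne_top
      _ = 4 * Real.pi / μ := by rw [hL0, ENNReal.toReal_ofReal (by positivity)]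
  have hI0 : (∫ y : EuclideanSpace ℝ (Fin 3),
      Real.exp (-μ * ‖y‖) / (‖y‖ * ‖(0 : EuclideanSpace ℝ (Fin 3)) - y‖)) = 4 * Real.pi / μ := by
    rw [hIeq 0, hL0, ENNReal.toReal_ofReal (by positivity)]
  refine le_antisymm (ciSup_le hle) ?_
  rw [← hI0]
  have hbdd : BddAbove (Set.range fun x : EuclideanSpace ℝ (Fin 3) =>
      ∫ y : EuclideanSpace ℝ (Fin 3), Real.exp (-μ * ‖y‖) / (‖y‖ * ‖x - y‖)) := by
    refine ⟨4 * Real.pi / μ, ?_⟩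
    rintro a ⟨x, rfl⟩
    exact hle x
  exact le_ciSup (f := fun x : EuclideanSpace ℝ (Fin 3) =>
    ∫ y : EuclideanSpace ℝ (Fin 3), Real.exp (-μ * ‖y‖) / (‖y‖ * ‖x - y‖)) hbdd
    (0 : EuclideanSpace ℝ (Fin 3))
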